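/- Let ν be a Borel measure on (0,1) such that ∫_{(0,1)} u ν(du) < ∞ and ∫_{(0,1)} u (−log u) ν(du) < ∞. Then for every real ã > 1, the series ∑_{k=0}^∞ ∫_{(0, ã^{−k/2}]} u ν(du) is finite. -/

import Mathlib

open MeasureTheory Set
open scoped ENNReal

/-- if `ν` is a Borel measure on `(0,1)` with
`∫ u ν(du) < ∞` and `∫ u (-log u) ν(du) < ∞`, then for every `a > 1` the series
`∑_k ∫_{(0, a^{-k/2}]} u ν(du)` is finite. -/
theorem stmt10 (ν : Measure ℝ) (hsupp : ν (Set.Ioo (0 : ℝ) 1)ᶜ = 0)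
    (h1 : ∫⁻ u in Set.Ioo (0 : ℝ) 1, ENNReal.ofReal u ∂ν < ⊤)
    (h2 : ∫⁻ u in Set.Ioo (0 : ℝ) 1, ENNReal.ofReal (u * (-Real.log u)) ∂ν < ⊤)
    (a : ℝ) (ha : 1 < a) :
    ∑' k : ℕ, ∫⁻ u in Set.Ioc (0 : ℝ) (a ^ (-(k : ℝ) / 2)), ENNReal.ofReal u ∂ν < ⊤ := by
  have ha0 : (0 : ℝ) < a := lt_trans one_pos ha
  set c := Real.log a with hc
  have hc0 : 0 < c := Real.log_pos ha
  -- Step 1: rewrite each term as an integral over (0,1) of an indicator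
  have key : ∀ k : ℕ, ∫⁻ u in Set.Ioc (0 : ℝ) (a ^ (-(k : ℝ) / 2)), ENNReal.ofReal u ∂ν
      = ∫⁻ u in Set.Ioo (0 : ℝ) 1,
          (Set.Iic (a ^ (-(k : ℝ) / 2))).indicator (fun u => ENNReal.ofReal u) u ∂ν := by
    intro k
    rw [lintegral_indicator measurableSet_Iic, Measure.restrict_restrict measurableSet_Iic]
    have hae : Set.Ioc (0 : ℝ) (a ^ (-(k : ℝ) / 2)) =ᵐ[ν]
        ((Set.Iic (a ^ (-(k : ℝ) / 2)) ∩ Set.Ioo (0 : ℝ) 1 : Set ℝ)) := by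
      rw [Filter.eventuallyEq_set]
      filter_upwards [measure_eq_zero_iff_ae_notMem.mp hsupp] with u hu
      have hu' : u ∈ Set.Ioo (0 : ℝ) 1 := not_not.mp hu
      simp only [Set.mem_Ioc, Set.mem_inter_iff, Set.mem_Iic]
      constructor
      · rintro ⟨_, hr⟩
        exact ⟨hr, hu'⟩
      · rintro ⟨hr, _⟩
        exact ⟨hu'.1, hr⟩
    rw [Measure.restrict_congr_set hae]
  -- Step 2: swap sum and integral
  have hne : ∀ k : ℕ, Measurable fun u : ℝ =>
      (Set.Iic (a ^ (-(k : ℝ) / 2))).indicator (fun u => ENNReal.ofReal u) u :=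
    fun k => (ENNReal.measurable_ofReal.comp measurable_id).indicator measurableSet_Iic
  simp only [key]
  rw [← lintegral_tsum fun k => (hne k).aemeasurable]
  -- Step 3: pointwise bound
  have hpt : ∀ u ∈ Set.Ioo (0 : ℝ) 1,
      (∑' k : ℕ, (Set.Iic (a ^ (-(k : ℝ) / 2))).indicator (fun u => ENNReal.ofReal u) u)
      ≤ ENNReal.ofReal u + ENNReal.ofReal (2 / c) * ENNReal.ofReal (u * (-Real.log u)) := by
    intro u hu
    obtain ⟨hu0, hu1⟩ := hu
    have hlog : 0 < -Real.log u := by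
      have := Real.log_neg hu0 hu1
      linarith
    set M : ℝ := 2 * (-Real.log u) / c with hM
    have hM0 : 0 ≤ M := by positivity
    set N : ℕ := ⌊M⌋₊ + 1 with hN
    have hzero : ∀ k ∉ Finset.range N,
        (Set.Iic (a ^ (-(k : ℝ) / 2))).indicator (fun u => ENNReal.ofReal u) u = 0 := by
      intro k hk
      apply Set.indicator_of_notMem
      simp only [Set.mem_Iic, not_le]
      have hkM : M < (k : ℝ) := by
        have h1 : N ≤ k := by simpa [Finset.mem_range, not_lt] using hk
        have h2 : M < (N : ℝ) := by
          rw [hN]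
          push_cast
          exact Nat.lt_floor_add_one M
        exact h2.trans_le (by exact_mod_cast h1)
      have hrpos : (0 : ℝ) < a ^ (-(k : ℝ) / 2) := Real.rpow_pos_of_pos ha0 _
      rw [← Real.log_lt_log_iff hrpos hu0, Real.log_rpow ha0]
      rw [hM, div_lt_iff₀ hc0] at hkM
      nlinarith
    rw [tsum_eq_sum hzero]
    have hle : ∑ k ∈ Finset.range N,
        (Set.Iic (a ^ (-(k : ℝ) / 2))).indicator (fun u => ENNReal.ofReal u) u
        ≤ (N : ℝ≥0∞) * ENNReal.ofReal u := by
      calc ∑ k ∈ Finset.range N,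
          (Set.Iic (a ^ (-(k : ℝ) / 2))).indicator (fun u => ENNReal.ofReal u) u
          ≤ ∑ _k ∈ Finset.range N, ENNReal.ofReal u :=
            Finset.sum_le_sum fun k _ => Set.indicator_le_self _ _ u
        _ = (N : ℝ≥0∞) * ENNReal.ofReal u := by
            rw [Finset.sum_const, Finset.card_range, nsmul_eq_mul]
    refine hle.trans ?_
    have hNle : (N : ℝ≥0∞) ≤ ENNReal.ofReal (M + 1) := by
      rw [← ENNReal.ofReal_natCast]
      apply ENNReal.ofReal_le_ofReal
      rw [hN]
      push_cast
      have := Nat.floor_le hM0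
      linarith
    calc (N : ℝ≥0∞) * ENNReal.ofReal u ≤ ENNReal.ofReal (M + 1) * ENNReal.ofReal u :=
          mul_le_mul_left hNle _
      _ = ENNReal.ofReal ((M + 1) * u) := by
          rw [← ENNReal.ofReal_mul (by linarith)]
      _ = ENNReal.ofReal (u + (2 / c) * (u * (-Real.log u))) := by
          congr 1
          rw [hM]
          field_simp
          ring
      _ = ENNReal.ofReal u + ENNReal.ofReal (2 / c) * ENNReal.ofReal (u * (-Real.log u)) := by
          rw [ENNReal.ofReal_add hu0.le (by positivity),
            ENNReal.ofReal_mul (by positivity)]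
  -- Step 4: conclude
  have hbound : ∫⁻ u in Set.Ioo (0 : ℝ) 1,
      (∑' k : ℕ, (Set.Iic (a ^ (-(k : ℝ) / 2))).indicator (fun u => ENNReal.ofReal u) u) ∂ν
      ≤ ∫⁻ u in Set.Ioo (0 : ℝ) 1,
          (ENNReal.ofReal u + ENNReal.ofReal (2 / c) * ENNReal.ofReal (u * (-Real.log u))) ∂ν := by
    apply lintegral_mono_ae
    rw [ae_restrict_iff' measurableSet_Ioo]
    exact ae_of_all _ hpt
  refine hbound.trans_lt ?_
  rw [lintegral_add_left (by fun_prop), lintegral_const_mul (f := fun u : ℝ => ENNReal.ofReal (u * -Real.log u)) _ (measurable_id'.mul Real.measurable_log.neg).ennreal_ofReal]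
  exact ENNReal.add_lt_top.2 ⟨h1, ENNReal.mul_lt_top ENNReal.ofReal_lt_top h2⟩
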